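/- arXiv:1708.05809 — 7 statements merged into one kernel-verified Lean document; each statement's English description precedes it below -/
import Mathlib

section
/- Let G be a connected non-bipartite signed graph on n vertices and a ∈ ℤ^n. Then a lies in the subgroup of ℤ^n generated by {ρ(e) : e ∈ E(G)} if and only if Σ_{i=1}^n a_i is even. -/
open scoped BigOperators

namespace EdgeRing

/-- A signed edge on vertex set `Fin n`: endpoints `e.1`, `e.2.1` and sign `e.2.2`. -/
abbrev SEdge (n : ℕ) := Fin n × Fin n × ℤ

/-- A signed graph on `n` vertices: a set of signed edges (loops allowed, `e.1 = e.2.1`). -/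
structure SGraph (n : ℕ) where
  E : Set (SEdge n)
  sgn_unit : ∀ e ∈ E, e.2.2 = 1 ∨ e.2.2 = -1

variable {n : ℕ}

/-- `ρ(±ij) = ±(e_i + e_j)` (a loop at `i` gives `±2 e_i`), integer version. -/
def rhoZ (e : SEdge n) : Fin n → ℤ :=
  fun v => e.2.2 * ((if e.1 = v then 1 else 0) + (if e.2.1 = v then 1 else 0))

/-- real version of `rhoZ`. -/
def rhoR (e : SEdge n) : Fin n → ℝ := fun v => (rhoZ e v : ℝ)

def toR (a : Fin n → ℤ) : Fin n → ℝ := fun v => (a v : ℝ)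

def SGraph.rhoZSet (G : SGraph n) : Set (Fin n → ℤ) := {x | ∃ e ∈ G.E, x = rhoZ e}

def SGraph.rhoRSet (G : SGraph n) : Set (Fin n → ℝ) := {x | ∃ e ∈ G.E, x = rhoR e}

/-- `ℤρ(E(G))`: the subgroup of `ℤ^n` generated by the edge vectors. -/
def SGraph.lattice (G : SGraph n) : AddSubgroup (Fin n → ℤ) :=
  AddSubgroup.closure G.rhoZSet

/-- `ℤ₊ρ(E(G))`: the affine semigroup generated by the edge vectors. -/
def SGraph.sgp (G : SGraph n) : AddSubmonoid (Fin n → ℤ) :=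
  AddSubmonoid.closure G.rhoZSet

/-- adjacency via an edge of `G` (symmetric by definition). -/
def SGraph.adj (G : SGraph n) (i j : Fin n) : Prop :=
  ∃ e ∈ G.E, (e.1 = i ∧ e.2.1 = j) ∨ (e.1 = j ∧ e.2.1 = i)

/-- `G` is connected: any two vertices are joined by a walk. -/
def SGraph.Connected (G : SGraph n) : Prop :=
  ∀ i j : Fin n, Relation.ReflTransGen G.adj i j

/-- the vertex set of the connected component of `v`. -/
def SGraph.compSet (G : SGraph n) (v : Fin n) : Set (Fin n) :=
  {w | Relation.ReflTransGen G.adj v w}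

/-- `C` is (the vertex set of) a component of `G`. -/
def SGraph.IsComp (G : SGraph n) (C : Set (Fin n)) : Prop :=
  ∃ v, C = G.compSet v

/-- the edge `e` is incident to the vertex set `S`. -/
def incident (e : SEdge n) (S : Set (Fin n)) : Prop := e.1 ∈ S ∨ e.2.1 ∈ S

/-- the vertex set `C` is partitioned as `L ∪ R` and every edge of `G` incident to `C`
has one endpoint in `L` and one in `R`. -/
def SGraph.BipWith (G : SGraph n) (C L R : Set (Fin n)) : Prop :=
  C = L ∪ R ∧ Disjoint L R ∧
    ∀ e ∈ G.E, incident e C → ((e.1 ∈ L ∧ e.2.1 ∈ R) ∨ (e.1 ∈ R ∧ e.2.1 ∈ L))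

/-- the vertex set `C` (e.g. a component) is bipartite in `G`. -/
def SGraph.BipOn (G : SGraph n) (C : Set (Fin n)) : Prop := ∃ L R, G.BipWith C L R

/-- `L ∪ R` is a bipartition of (all of) `G`. -/
def SGraph.IsBipartition (G : SGraph n) (L R : Set (Fin n)) : Prop :=
  G.BipWith Set.univ L R

def SGraph.Bipartite (G : SGraph n) : Prop := ∃ L R, G.IsBipartition L R

/-- `comp G`: the number of connected components of `G`. -/
noncomputable def SGraph.comp (G : SGraph n) : ℕ := Nat.card {C : Set (Fin n) // G.IsComp C}

/-- `bicomp G`: the number of bipartite connected components of `G`. -/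
noncomputable def SGraph.bicomp (G : SGraph n) : ℕ :=
  Nat.card {C : Set (Fin n) // G.IsComp C ∧ G.BipOn C}

/-- the dual vector `e_L^* - e_R^*` as an element of `ℝ^n`. -/
noncomputable def dvec (L R : Set (Fin n)) : Fin n → ℝ :=
  fun v => Set.indicator L (fun _ => (1 : ℝ)) v - Set.indicator R (fun _ => (1 : ℝ)) v

/-- `L, R` witness the facet-subgraph condition for the bipartite component `C` of `H`:
`C = L ∪ R` is a bipartition, and every edge of `G` not in `H` is a positive edge
incident to `L` but not `R`, or a negative edge incident to `R` but not `L`. -/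
def FacetWitness (G H : SGraph n) (C L R : Set (Fin n)) : Prop :=
  H.BipWith C L R ∧
    ∀ e ∈ G.E \ H.E,
      (e.2.2 = 1 ∧ incident e L ∧ ¬ incident e R) ∨
      (e.2.2 = -1 ∧ incident e R ∧ ¬ incident e L)

/-- `H` is a facet subgraph of `G`. -/
def IsFacetSubgraph (G H : SGraph n) : Prop :=
  H.E ⊆ G.E ∧ H.bicomp = G.bicomp + 1 ∧
    ∀ C, H.IsComp C → H.BipOn C → ¬ G.IsComp C → ∃ L R, FacetWitness G H C L R

/-- the cone generated by `S`: all nonnegative real combinations. -/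
def coneOf (S : Set (Fin n → ℝ)) : Set (Fin n → ℝ) :=
  {x | ∃ (t : Finset (Fin n → ℝ)) (c : (Fin n → ℝ) → ℝ),
    ↑t ⊆ S ∧ (∀ y, 0 ≤ c y) ∧ x = ∑ y ∈ t, c y • y}

/-- the dimension of a subset of `ℝ^n`: dimension of its linear span. -/
noncomputable def sdim (S : Set (Fin n → ℝ)) : ℕ := Module.finrank ℝ (Submodule.span ℝ S)

/-- `F` is a face of the cone `C`, cut out by a supporting linear form. -/
def IsFaceOf (C F : Set (Fin n → ℝ)) : Prop :=
  ∃ σ : (Fin n → ℝ) →ₗ[ℝ] ℝ, (∀ x ∈ C, 0 ≤ σ x) ∧ F = C ∩ {x | σ x = 0}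

/-- `F` is a facet of the cone `C`: a proper face of dimension `dim C - 1`. -/
def IsFacetOf (C F : Set (Fin n → ℝ)) : Prop :=
  IsFaceOf C F ∧ F ≠ C ∧ sdim F + 1 = sdim C

/-- the subgraph of `G` consisting of the edges inside the vertex set `C`. -/
def SGraph.restrict (G : SGraph n) (C : Set (Fin n)) : SGraph n :=
  ⟨{e ∈ G.E | e.1 ∈ C}, fun e he => G.sgn_unit e he.1⟩

/-- Vitulli's criterion for Serre's `R₁` condition for the edge ring `k[G]`
(taken here as the definition of `R₁`). -/
def SerreR1 (G : SGraph n) : Prop :=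
  ∀ F, IsFacetOf (coneOf G.rhoRSet) F →
    ∃ σ : (Fin n → ℝ) →ₗ[ℝ] ℝ,
      (∀ x ∈ coneOf G.rhoRSet, 0 ≤ σ x) ∧
      F = coneOf G.rhoRSet ∩ {x | σ x = 0} ∧
      (∀ a ∈ G.lattice, ∃ z : ℤ, σ (toR a) = z) ∧
      (∃ a ∈ G.sgp, σ (toR a) = 1) ∧
      ((AddSubgroup.closure {a : Fin n → ℤ | a ∈ G.sgp ∧ toR a ∈ F} : AddSubgroup (Fin n → ℤ)) :
          Set (Fin n → ℤ)) = {a : Fin n → ℤ | a ∈ G.lattice ∧ σ (toR a) = 0}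

/-! ### Mixed signed, directed graphs -/

/-- A mixed signed, directed graph: signed edges `SE` (loops allowed) and
directed edges `DE` (no directed loops). -/
structure MGraph (n : ℕ) where
  SE : Set (SEdge n)
  DE : Set (Fin n × Fin n)
  sgn_unit : ∀ e ∈ SE, e.2.2 = 1 ∨ e.2.2 = -1
  no_dloop : ∀ e ∈ DE, e.1 ≠ e.2

/-- `ρ((i,j)) = e_j - e_i` for a directed edge. -/
def rhoD (e : Fin n × Fin n) : Fin n → ℤ :=
  fun v => (if e.2 = v then 1 else 0) - (if e.1 = v then 1 else 0)

def MGraph.rhoZSet (G : MGraph n) : Set (Fin n → ℤ) :=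
  {x | ∃ e ∈ G.SE, x = rhoZ e} ∪ {x | ∃ e ∈ G.DE, x = rhoD e}

def MGraph.rhoRSet (G : MGraph n) : Set (Fin n → ℝ) :=
  {x | ∃ a ∈ G.rhoZSet, x = toR a}

/-- `ℤρ(E(G))` for a mixed signed, directed graph. -/
def MGraph.lattice (G : MGraph n) : AddSubgroup (Fin n → ℤ) :=
  AddSubgroup.closure G.rhoZSet

def MGraph.adj (G : MGraph n) (i j : Fin n) : Prop :=
  (∃ e ∈ G.SE, (e.1 = i ∧ e.2.1 = j) ∨ (e.1 = j ∧ e.2.1 = i)) ∨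
  (∃ e ∈ G.DE, (e.1 = i ∧ e.2 = j) ∨ (e.1 = j ∧ e.2 = i))

def MGraph.Connected (G : MGraph n) : Prop :=
  ∀ i j : Fin n, Relation.ReflTransGen G.adj i j

def MGraph.compSet (G : MGraph n) (v : Fin n) : Set (Fin n) :=
  {w | Relation.ReflTransGen G.adj v w}

def MGraph.IsComp (G : MGraph n) (C : Set (Fin n)) : Prop :=
  ∃ v, C = G.compSet v

noncomputable def MGraph.comp (G : MGraph n) : ℕ := Nat.card {C : Set (Fin n) // G.IsComp C}

/-- the directed edge `e` is incident to the vertex set `S`. -/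
def dincident (e : Fin n × Fin n) (S : Set (Fin n)) : Prop := e.1 ∈ S ∨ e.2 ∈ S

/-- Bipartiteness of the augmented signed graph of `G` on the vertex set `C`,
expressed on `G` itself: `C = L ∪ R`, every signed edge incident to `C` crosses
between `L` and `R`, and every directed edge incident to `C` has both endpoints
in the same part (its artificial vertex lies on the other side). -/
def MGraph.BipWith (G : MGraph n) (C L R : Set (Fin n)) : Prop :=
  C = L ∪ R ∧ Disjoint L R ∧
    (∀ e ∈ G.SE, incident e C → ((e.1 ∈ L ∧ e.2.1 ∈ R) ∨ (e.1 ∈ R ∧ e.2.1 ∈ L))) ∧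
    (∀ e ∈ G.DE, dincident e C → ((e.1 ∈ L ∧ e.2 ∈ L) ∨ (e.1 ∈ R ∧ e.2 ∈ R)))

def MGraph.BipOn (G : MGraph n) (C : Set (Fin n)) : Prop := ∃ L R, G.BipWith C L R

def MGraph.IsBipartition (G : MGraph n) (L R : Set (Fin n)) : Prop :=
  G.BipWith Set.univ L R

def MGraph.Bipartite (G : MGraph n) : Prop := ∃ L R, G.IsBipartition L R

/-- number of components of `G` whose augmentation is bipartite. -/
noncomputable def MGraph.bicomp (G : MGraph n) : ℕ :=
  Nat.card {C : Set (Fin n) // G.IsComp C ∧ G.BipOn C}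

/-- facet-subgraph witness for mixed signed, directed graphs. -/
def MFacetWitness (G H : MGraph n) (C L R : Set (Fin n)) : Prop :=
  H.BipWith C L R ∧
    (∀ e ∈ G.SE \ H.SE,
      (e.2.2 = 1 ∧ incident e L ∧ ¬ incident e R) ∨
      (e.2.2 = -1 ∧ incident e R ∧ ¬ incident e L)) ∧
    (∀ e ∈ G.DE \ H.DE, (e.2 ∈ L ∧ e.1 ∉ L) ∨ (e.1 ∈ R ∧ e.2 ∉ R))

/-- `H` is a facet subgraph of the mixed signed, directed graph `G`. -/
def IsMFacetSubgraph (G H : MGraph n) : Prop :=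
  H.SE ⊆ G.SE ∧ H.DE ⊆ G.DE ∧ H.bicomp = G.bicomp + 1 ∧
    ∀ C, H.IsComp C → H.BipOn C → ¬ G.IsComp C → ∃ L R, MFacetWitness G H C L R

/-- standard basis vector (auxiliary). -/
def sing (i : Fin n) : Fin n → ℤ := Pi.single i 1

lemma rhoZ_eq_smul (e : SEdge n) : rhoZ e = e.2.2 • (sing e.1 + sing e.2.1) := by
  funext v
  simp [rhoZ, sing, Pi.single_apply, eq_comm]

lemma edge_mem {G : SGraph n} {e : SEdge n} (he : e ∈ G.E) :
    sing e.1 + sing e.2.1 ∈ G.lattice := by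
  have h : rhoZ e ∈ G.lattice := AddSubgroup.subset_closure ⟨e, he, rfl⟩
  rcases G.sgn_unit e he with hs | hs
  · rw [rhoZ_eq_smul, hs, one_smul] at h; exact h
  · rw [rhoZ_eq_smul, hs] at h
    rw [show sing e.1 + sing e.2.1 = -((-1 : ℤ) • (sing e.1 + sing e.2.1)) by rw [neg_smul, one_smul, neg_neg]]
    exact G.lattice.neg_mem h

lemma adj_mem {G : SGraph n} {i j : Fin n} (h : G.adj i j) :
    sing i + sing j ∈ G.lattice := by
  obtain ⟨e, he, ⟨h1, h2⟩ | ⟨h1, h2⟩⟩ := h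
  · rw [← h1, ← h2]; exact edge_mem he
  · rw [← h1, ← h2, add_comm]; exact edge_mem he

lemma walk_mem {G : SGraph n} {i j : Fin n} (h : Relation.ReflTransGen G.adj i j) :
    sing i + sing j ∈ G.lattice ∨ sing i - sing j ∈ G.lattice := by
  induction h with
  | refl => right; simpa using G.lattice.zero_mem
  | @tail b c _ hbc ih =>
    rcases ih with hL | hL
    · right
      have h2 := G.lattice.sub_mem hL (adj_mem hbc)
      have : sing i - sing c = (sing i + sing b) - (sing b + sing c) := by abel
      rw [this]; exact h2
    · left
      have h2 := G.lattice.add_mem hL (adj_mem hbc)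
      have : sing i + sing c = (sing i - sing b) + (sing b + sing c) := by abel
      rw [this]; exact h2

/-- for a connected non-bipartite signed graph, `a ∈ ℤρ(E(G))` iff the
coordinate sum of `a` is even. -/
theorem stmt3 {n : ℕ} (G : SGraph n) (hconn : G.Connected) (hnb : ¬ G.Bipartite)
    (a : Fin n → ℤ) :
    a ∈ G.lattice ↔ (2 : ℤ) ∣ ∑ i, a i := by
  constructor
  · -- forward: each generator has even coordinate sum
    intro ha
    refine AddSubgroup.closure_induction ?_ ?_ ?_ ?_ ha
    · rintro x ⟨e, -, rfl⟩
      refine ⟨e.2.2, ?_⟩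
      simp [rhoZ, ← Finset.mul_sum, Finset.sum_add_distrib, Finset.sum_ite_eq,
        mul_comm, mul_add]
      ring
    · simp
    · intro x y _ _ hx hy
      simp only [Pi.add_apply]
      rw [Finset.sum_add_distrib]; exact dvd_add hx hy
    · intro x _ hx
      simpa [← Finset.sum_neg_distrib] using hx.neg_right
  · intro hsum
    rcases isEmpty_or_nonempty (Fin n) with hempty | hne
    · -- no vertices: G is (vacuously) bipartite, contradiction
      exact absurd ⟨∅, ∅, by simp [SGraph.BipWith, Set.univ_eq_empty_iff.mpr hempty],
        disjoint_bot_left, fun e _ _ => (hempty.false e.1).elim⟩ hnb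
    · obtain ⟨v0⟩ := hne
      -- first: some (hence every) vertex has 2•e_v in the lattice
      have h2 : ∃ w, (2 : ℤ) • sing w ∈ G.lattice := by
        by_contra h2
        push_neg at h2
        apply hnb
        refine ⟨{w | sing v0 + sing w ∈ G.lattice},
          {w | sing v0 + sing w ∈ G.lattice}ᶜ,
          (Set.union_compl_self _).symm, disjoint_compl_right, ?_⟩
        intro e he _
        have hedge := edge_mem he
        have key : ∀ w : Fin n, sing v0 + sing w ∈ G.lattice ∨
            sing v0 - sing w ∈ G.lattice := fun w => walk_mem (hconn v0 w)
        by_cases h1 : sing v0 + sing e.1 ∈ G.lattice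
        · left
          refine ⟨h1, fun hj => h2 v0 ?_⟩
          have h3 := G.lattice.sub_mem (G.lattice.add_mem h1 hj) hedge
          have : (2 : ℤ) • sing v0 =
              ((sing v0 + sing e.1) + (sing v0 + sing e.2.1)) -
                (sing e.1 + sing e.2.1) := by
            rw [two_smul]; abel
          rw [this]; exact h3
        · right
          refine ⟨h1, ?_⟩
          have hsub : sing v0 - sing e.1 ∈ G.lattice := (key e.1).resolve_left h1
          have h3 := G.lattice.add_mem hsub hedge
          have : sing v0 + sing e.2.1 =
              (sing v0 - sing e.1) + (sing e.1 + sing e.2.1) := by abel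
          show sing v0 + sing e.2.1 ∈ G.lattice
          rw [this]; exact h3
      obtain ⟨w, hw⟩ := h2
      -- every vertex has 2•e_v in the lattice
      have hall : ∀ v, (2 : ℤ) • sing v ∈ G.lattice := by
        intro v
        rcases walk_mem (hconn w v) with h | h
        · have h3 := G.lattice.sub_mem
            (G.lattice.zsmul_mem h 2) hw
          have : (2 : ℤ) • sing v =
              (2 : ℤ) • (sing w + sing v) - (2 : ℤ) • sing w := by
            simp [smul_add]
          rw [this]; exact h3
        · have h3 := G.lattice.sub_mem hw (G.lattice.zsmul_mem h 2)
          have : (2 : ℤ) • sing v =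
              (2 : ℤ) • sing w - (2 : ℤ) • (sing w - sing v) := by
            simp [smul_sub]
          rw [this]; exact h3
      -- differences of basis vectors are in the lattice
      have hdiff : ∀ u v : Fin n, sing u - sing v ∈ G.lattice := by
        intro u v
        rcases walk_mem (hconn u v) with h | h
        · have h3 := G.lattice.sub_mem h (hall v)
          have : sing u - sing v = (sing u + sing v) - (2 : ℤ) • sing v := by
            rw [two_smul]; abel
          rw [this]; exact h3
        · exact h
      -- decompose a
      obtain ⟨k, hk⟩ := hsum
      have hdecomp : a = (∑ v, a v • (sing v - sing v0)) + k • ((2 : ℤ) • sing v0) := by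
        funext u
        simp only [Pi.add_apply, Finset.sum_apply, Pi.smul_apply, smul_eq_mul,
          Pi.sub_apply, sing, Pi.single_apply, mul_sub]
        rw [Finset.sum_sub_distrib, ← Finset.sum_mul]
        simp only [mul_ite, mul_one, mul_zero, Finset.sum_ite_eq, Finset.mem_univ,
          if_true]
        by_cases h : u = v0 <;> simp [h, hk] <;> ring
      rw [hdecomp]
      exact G.lattice.add_mem
        (AddSubgroup.sum_mem _ fun v _ => G.lattice.zsmul_mem (hdiff v v0) (a v))
        (G.lattice.zsmul_mem (hall v0) k)

end EdgeRing
end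

section
/- Let G be a connected bipartite signed graph on n vertices with bipartition V(G) = L ∪ R and let a ∈ ℤ^n. Then a lies in the subgroup of ℤ^n generated by {ρ(e) : e ∈ E(G)} if and only if Σ_{i∈L} a_i = Σ_{j∈R} a_j. -/
open scoped BigOperators

namespace EdgeRing

variable {n : ℕ}

lemma edge_mem_lattice {n : ℕ} (G : SGraph n) {e : SEdge n} (he : e ∈ G.E) :
    (Pi.single e.1 (1:ℤ) + Pi.single e.2.1 (1:ℤ)) ∈ G.lattice := by
  have hgen : rhoZ e ∈ G.lattice :=
    AddSubgroup.subset_closure ⟨e, he, rfl⟩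
  rcases G.sgn_unit e he with h1 | h1
  · have : rhoZ e = Pi.single e.1 (1:ℤ) + Pi.single e.2.1 (1:ℤ) := by
      funext v
      simp [rhoZ, h1, Pi.single_apply, eq_comm]
    rwa [this] at hgen
  · have : Pi.single e.1 (1:ℤ) + Pi.single e.2.1 (1:ℤ) = -(rhoZ e) := by
      funext v
      simp [rhoZ, h1, Pi.single_apply, eq_comm]
      try ring
    rw [this]
    exact neg_mem hgen

/-- for a connected bipartite signed graph with bipartition `L ∪ R`,
`a ∈ ℤρ(E(G))` iff the coordinate sums of `a` over `L` and over `R` agree. -/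
theorem stmt4 {n : ℕ} (G : SGraph n) (hconn : G.Connected) (L R : Set (Fin n))
    (hbip : G.IsBipartition L R) (a : Fin n → ℤ) :
    a ∈ G.lattice ↔ ∑ i, L.indicator a i = ∑ i, R.indicator a i := by
  classical
  obtain ⟨hU, hdisj, hedge⟩ := hbip
  have hside : ∀ v : Fin n, (v ∈ L ∧ v ∉ R) ∨ (v ∈ R ∧ v ∉ L) := by
    intro v
    have hv : v ∈ L ∪ R := hU ▸ Set.mem_univ v
    rcases hv with hv | hv
    · exact Or.inl ⟨hv, fun hr => hdisj.le_bot ⟨hv, hr⟩⟩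
    · exact Or.inr ⟨hv, fun hl => hdisj.le_bot ⟨hl, hv⟩⟩
  constructor
  · -- forward: show sums agree for everything in the lattice
    intro ha
    have key : ∀ x ∈ G.lattice, ∑ i, L.indicator x i = ∑ i, R.indicator x i := by
      intro x hx
      induction hx using AddSubgroup.closure_induction with
      | mem y hy =>
        obtain ⟨e, he, rfl⟩ := hy
        have hsum : ∀ (S : Set (Fin n)),
            ∑ i, S.indicator (rhoZ e) i
              = e.2.2 * ((if e.1 ∈ S then 1 else 0) + (if e.2.1 ∈ S then 1 else 0)) := by
          intro S
          have : ∀ i, S.indicator (rhoZ e) i =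
              e.2.2 * ((if e.1 = i ∧ i ∈ S then 1 else 0) +
                (if e.2.1 = i ∧ i ∈ S then 1 else 0)) := by
            intro i
            by_cases hi : i ∈ S <;> simp [Set.indicator_apply, hi, rhoZ]
          rw [Finset.sum_congr rfl (fun i _ => this i), ← Finset.mul_sum,
            Finset.sum_add_distrib]
          congr 1
          congr 1
          · simp only [ite_and]
            rw [Finset.sum_ite_eq (Finset.univ) e.1 (fun i => if i ∈ S then (1:ℤ) else 0)]
            simp
          · simp only [ite_and]
            rw [Finset.sum_ite_eq (Finset.univ) e.2.1 (fun i => if i ∈ S then (1:ℤ) else 0)]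
            simp
        rw [hsum L, hsum R]
        rcases hedge e he (Or.inl (Set.mem_univ _)) with ⟨h1, h2⟩ | ⟨h1, h2⟩ <;>
          rcases hside e.1 with ⟨ha1, ha2⟩ | ⟨ha1, ha2⟩ <;>
          rcases hside e.2.1 with ⟨hb1, hb2⟩ | ⟨hb1, hb2⟩ <;>
          simp_all
      | zero => simp
      | add y z _ _ hy hz =>
        have hL : ∀ i, L.indicator (y + z) i = L.indicator y i + L.indicator z i := by
          intro i; by_cases hi : i ∈ L <;> simp [Set.indicator_apply, hi]
        have hR : ∀ i, R.indicator (y + z) i = R.indicator y i + R.indicator z i := by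
          intro i; by_cases hi : i ∈ R <;> simp [Set.indicator_apply, hi]
        rw [Finset.sum_congr rfl (fun i _ => hL i), Finset.sum_congr rfl (fun i _ => hR i),
          Finset.sum_add_distrib, Finset.sum_add_distrib, hy, hz]
      | neg y _ hy =>
        have hL : ∀ i, L.indicator (-y) i = -(L.indicator y i) := by
          intro i; by_cases hi : i ∈ L <;> simp [Set.indicator_apply, hi]
        have hR : ∀ i, R.indicator (-y) i = -(R.indicator y i) := by
          intro i; by_cases hi : i ∈ R <;> simp [Set.indicator_apply, hi]
        rw [Finset.sum_congr rfl (fun i _ => hL i), Finset.sum_congr rfl (fun i _ => hR i),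
          Finset.sum_neg_distrib, Finset.sum_neg_distrib, hy]
    exact key a ha
  · -- backward
    intro hsum
    -- adjacency gives opposite sides and edge vector in the lattice
    have cross : ∀ {j k : Fin n}, G.adj j k →
        ¬(j ∈ L ↔ k ∈ L) ∧ (Pi.single j (1:ℤ) + Pi.single k (1:ℤ)) ∈ G.lattice := by
      intro j k hadj
      obtain ⟨e, he, hor⟩ := hadj
      have hcr := hedge e he (Or.inl (Set.mem_univ _))
      have hmem := edge_mem_lattice G he
      rcases hor with ⟨h1, h2⟩ | ⟨h1, h2⟩
      · subst h1; subst h2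
        constructor
        · rcases hcr with ⟨ha1, ha2⟩ | ⟨ha1, ha2⟩ <;>
            rcases hside e.1 with hs | hs <;> rcases hside e.2.1 with ht | ht <;> tauto
        · exact hmem
      · subst h1; subst h2
        constructor
        · rcases hcr with ⟨ha1, ha2⟩ | ⟨ha1, ha2⟩ <;>
            rcases hside e.2.1 with hs | hs <;> rcases hside e.1 with ht | ht <;> tauto
        · rwa [add_comm] at hmem
    -- walk lemma
    have walk : ∀ i j : Fin n, Relation.ReflTransGen G.adj i j →
        ((i ∈ L ↔ j ∈ L) → Pi.single i (1:ℤ) - Pi.single j (1:ℤ) ∈ G.lattice) ∧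
        (¬(i ∈ L ↔ j ∈ L) → Pi.single i (1:ℤ) + Pi.single j (1:ℤ) ∈ G.lattice) := by
      intro i j h
      induction h with
      | refl =>
        refine ⟨fun _ => by simpa using (zero_mem G.lattice), fun h => absurd Iff.rfl h⟩
      | tail _ hadj ih =>
        rename_i b c _
        obtain ⟨hbc, hmem⟩ := cross hadj
        constructor
        · intro h
          have hib : ¬(i ∈ L ↔ b ∈ L) := by tauto
          have h1 := ih.2 hib
          have : (Pi.single i (1:ℤ) - Pi.single c (1:ℤ) : Fin n → ℤ)
              = (Pi.single i (1:ℤ) + Pi.single b (1:ℤ)) - (Pi.single b (1:ℤ) + Pi.single c (1:ℤ)) := by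
            abel
          rw [this]
          exact sub_mem h1 hmem
        · intro h
          have hib : (i ∈ L ↔ b ∈ L) := by tauto
          have h1 := ih.1 hib
          have : (Pi.single i (1:ℤ) + Pi.single c (1:ℤ) : Fin n → ℤ)
              = (Pi.single i (1:ℤ) - Pi.single b (1:ℤ)) + (Pi.single b (1:ℤ) + Pi.single c (1:ℤ)) := by
            abel
          rw [this]
          exact add_mem h1 hmem
    rcases isEmpty_or_nonempty (Fin n) with hemp | hne
    · have : a = 0 := funext fun v => hemp.elim v
      rw [this]; exact zero_mem _
    · obtain ⟨v0⟩ := hne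
      set c : Fin n → (Fin n → ℤ) := fun v =>
        if (v ∈ L ↔ v0 ∈ L) then Pi.single v (1:ℤ) - Pi.single v0 (1:ℤ)
        else Pi.single v (1:ℤ) + Pi.single v0 (1:ℤ) with hc
      have hcmem : ∀ v, c v ∈ G.lattice := by
        intro v
        by_cases hv : (v ∈ L ↔ v0 ∈ L)
        · simp only [hc, if_pos hv]; exact (walk v v0 (hconn v v0)).1 hv
        · simp only [hc, if_neg hv]; exact (walk v v0 (hconn v v0)).2 hv
      set d : Fin n → ℤ := fun v => if (v ∈ L ↔ v0 ∈ L) then -(a v) else a v with hd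
      have hdsum : ∑ v, d v = 0 := by
        rcases hside v0 with ⟨hv0, _⟩ | ⟨hv0, _⟩
        · have : ∀ v, d v = R.indicator a v - L.indicator a v := by
            intro v
            rcases hside v with ⟨h1, h2⟩ | ⟨h1, h2⟩ <;>
              simp [hd, Set.indicator_apply, h1, h2, hv0]
          rw [Finset.sum_congr rfl (fun v _ => this v), Finset.sum_sub_distrib, hsum]
          ring
        · have : ∀ v, d v = L.indicator a v - R.indicator a v := by
            intro v
            have hv0L : v0 ∉ L := (hside v0).elim (fun h => absurd hv0 h.2) (fun h => h.2)
            rcases hside v with ⟨h1, h2⟩ | ⟨h1, h2⟩ <;>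
              simp [hd, Set.indicator_apply, h1, h2, hv0L]
          rw [Finset.sum_congr rfl (fun v _ => this v), Finset.sum_sub_distrib, hsum]
          ring
      have key : a = ∑ v, a v • c v := by
        have step : ∀ v, a v • c v = (Pi.single v (a v) : Fin n → ℤ) + d v • Pi.single v0 (1:ℤ) := by
          intro v
          have hsingle : a v • Pi.single v (1:ℤ) = (Pi.single v (a v) : Fin n → ℤ) := by
            funext w; simp [Pi.single_apply]
          by_cases hv : (v ∈ L ↔ v0 ∈ L)
          · simp only [hc, hd, if_pos hv, smul_sub, hsingle, neg_smul, sub_eq_add_neg]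
            rw [smul_add, smul_neg, hsingle]
          · simp only [hc, hd, if_neg hv, smul_add, hsingle]
        rw [Finset.sum_congr rfl (fun v _ => step v), Finset.sum_add_distrib,
          Finset.univ_sum_single, ← Finset.sum_smul, hdsum, zero_smul, add_zero]
      rw [key]
      exact sum_mem fun v _ => zsmul_mem (hcmem v) _

end EdgeRing
end

section
/- Let G be a connected non-bipartite signed graph and let i, j be any two vertices of G. Then both e_i + e_j and e_i − e_j lie in the subgroup of ℤ^n generated by {ρ(e) : e ∈ E(G)}. -/
open scoped BigOperators

namespace EdgeRing

variable {n : ℕ}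

lemma mem_lattice_of_edge (G : SGraph n) {e : SEdge n} (he : e ∈ G.E) :
    (Pi.single e.1 1 + Pi.single e.2.1 1 : Fin n → ℤ) ∈ G.lattice := by
  have hr : rhoZ e ∈ G.lattice := AddSubgroup.subset_closure ⟨e, he, rfl⟩
  rcases G.sgn_unit e he with h | h
  · convert hr using 1
    funext v
    simp [rhoZ, h, Pi.single_apply, eq_comm]
  · have hneg := neg_mem hr
    convert hneg using 1
    funext v
    simp [rhoZ, h, Pi.single_apply, eq_comm]

lemma mem_lattice_of_adj (G : SGraph n) {a b : Fin n} (h : G.adj a b) :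
    (Pi.single a 1 + Pi.single b 1 : Fin n → ℤ) ∈ G.lattice := by
  obtain ⟨e, he, hc⟩ := h
  rcases hc with ⟨h1, h2⟩ | ⟨h1, h2⟩
  · rw [← h1, ← h2]; exact mem_lattice_of_edge G he
  · rw [← h1, ← h2, add_comm]; exact mem_lattice_of_edge G he

lemma walk_sum_or_diff (G : SGraph n) {a b : Fin n}
    (h : Relation.ReflTransGen G.adj a b) :
    (Pi.single a 1 + Pi.single b 1 : Fin n → ℤ) ∈ G.lattice ∨
      (Pi.single a 1 - Pi.single b 1 : Fin n → ℤ) ∈ G.lattice := by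
  induction h with
  | refl => right; simpa using zero_mem G.lattice
  | @tail c d _ hadj ih =>
    have hP := mem_lattice_of_adj G hadj
    rcases ih with hp | hm
    · right
      have hs := sub_mem hp hP
      have heq : (Pi.single a 1 - Pi.single d 1 : Fin n → ℤ)
          = (Pi.single a 1 + Pi.single c 1) - (Pi.single c 1 + Pi.single d 1) := by abel
      rwa [heq]
    · left
      have hs := add_mem hm hP
      have heq : (Pi.single a 1 + Pi.single d 1 : Fin n → ℤ)
          = (Pi.single a 1 - Pi.single c 1) + (Pi.single c 1 + Pi.single d 1) := by abel
      rwa [heq]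

/-- in a connected non-bipartite signed graph, both `e_i + e_j` and
`e_i - e_j` lie in `ℤρ(E(G))` for any vertices `i, j`. -/
theorem stmt5 {n : ℕ} (G : SGraph n) (hconn : G.Connected) (hnb : ¬ G.Bipartite)
    (i j : Fin n) :
    (Pi.single i 1 + Pi.single j 1 : Fin n → ℤ) ∈ G.lattice ∧
      (Pi.single i 1 - Pi.single j 1 : Fin n → ℤ) ∈ G.lattice := by
  classical
  by_cases hu : ∃ u : Fin n, (Pi.single u 1 + Pi.single u 1 : Fin n → ℤ) ∈ G.lattice
  · obtain ⟨u, hu⟩ := hu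
    have key : ∀ a : Fin n, (Pi.single a 1 + Pi.single u 1 : Fin n → ℤ) ∈ G.lattice ∧
        (Pi.single a 1 - Pi.single u 1 : Fin n → ℤ) ∈ G.lattice := by
      intro a
      rcases walk_sum_or_diff G (hconn a u) with hp | hm
      · refine ⟨hp, ?_⟩
        have hs := sub_mem hp hu
        have heq : (Pi.single a 1 - Pi.single u 1 : Fin n → ℤ)
            = (Pi.single a 1 + Pi.single u 1) - (Pi.single u 1 + Pi.single u 1) := by abel
        rwa [heq]
      · refine ⟨?_, hm⟩
        have hs := add_mem hm hu
        have heq : (Pi.single a 1 + Pi.single u 1 : Fin n → ℤ)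
            = (Pi.single a 1 - Pi.single u 1) + (Pi.single u 1 + Pi.single u 1) := by abel
        rwa [heq]
    obtain ⟨hpi, hmi⟩ := key i
    obtain ⟨hpj, hmj⟩ := key j
    constructor
    · have hs := add_mem hmi hpj
      have heq : (Pi.single i 1 + Pi.single j 1 : Fin n → ℤ)
          = (Pi.single i 1 - Pi.single u 1) + (Pi.single j 1 + Pi.single u 1) := by abel
      rwa [heq]
    · have hs := sub_mem hmi hmj
      have heq : (Pi.single i 1 - Pi.single j 1 : Fin n → ℤ)
          = (Pi.single i 1 - Pi.single u 1) - (Pi.single j 1 - Pi.single u 1) := by abel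
      rwa [heq]
  · exfalso
    push_neg at hu
    apply hnb
    set L : Set (Fin n) :=
      {v | (Pi.single i 1 - Pi.single v 1 : Fin n → ℤ) ∈ G.lattice} with hL
    refine ⟨L, Lᶜ, ?_, ?_, ?_⟩
    · exact (Set.union_compl_self L).symm
    · exact disjoint_compl_right
    · intro e he _
      have hP : (Pi.single e.1 1 + Pi.single e.2.1 1 : Fin n → ℤ) ∈ G.lattice :=
        mem_lattice_of_edge G he
      by_cases hmu : (Pi.single i 1 - Pi.single e.1 1 : Fin n → ℤ) ∈ G.lattice
      · left
        refine ⟨hmu, fun hmw => ?_⟩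
        have hmw' : (Pi.single i 1 - Pi.single e.2.1 1 : Fin n → ℤ) ∈ G.lattice := hmw
        have hs := add_mem (add_mem hmu hmw') hP
        have heq : (Pi.single i 1 + Pi.single i 1 : Fin n → ℤ)
            = ((Pi.single i 1 - Pi.single e.1 1) + (Pi.single i 1 - Pi.single e.2.1 1))
              + (Pi.single e.1 1 + Pi.single e.2.1 1) := by abel
        exact hu i (heq ▸ hs)
      · right
        refine ⟨hmu, ?_⟩
        have hpu : (Pi.single i 1 + Pi.single e.1 1 : Fin n → ℤ) ∈ G.lattice := by
          rcases walk_sum_or_diff G (hconn i e.1) with hp | hm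
          · exact hp
          · exact absurd hm hmu
        have hs := sub_mem hpu hP
        have heq : (Pi.single i 1 - Pi.single e.2.1 1 : Fin n → ℤ)
            = (Pi.single i 1 + Pi.single e.1 1) - (Pi.single e.1 1 + Pi.single e.2.1 1) := by
          abel
        show (Pi.single i 1 - Pi.single e.2.1 1 : Fin n → ℤ) ∈ G.lattice
        rwa [heq]

end EdgeRing
end

section
/- Let G be a connected signed graph containing an odd-length closed walk consisting entirely of signed edges (equivalently, G is not bipartite). Then for any two vertices i, j connected by a walk {i = i_0, i_1, ..., i_m = j} of odd length, there exist integer weights b_ℓ ∈ {−1, +1} such that Σ_{ℓ=1}^m b_ℓ ρ(i_{ℓ−1} i_ℓ) = e_i + e_j. -/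
open scoped BigOperators

namespace EdgeRing

variable {n : ℕ}

lemma telescope {M : Type*} [AddCommGroup M] (m : ℕ) (f : Fin (m + 1) → M) :
    ∑ ℓ : Fin m, ((-1 : ℤ) ^ (ℓ : ℕ)) • (f ℓ.castSucc + f ℓ.succ)
      = f 0 + ((-1 : ℤ) ^ (m + 1)) • f (Fin.last m) := by
  induction m with
  | zero => simp [Fin.last]
  | succ m ih =>
    rw [Fin.sum_univ_castSucc]
    have h := ih (fun k => f k.castSucc)
    simp only [Fin.coe_castSucc, Fin.val_last, Fin.succ_castSucc]
    rw [h]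
    have hl : (Fin.last m).succ = Fin.last (m + 1) := rfl
    have h0 : (Fin.castSucc (0 : Fin (m + 1))) = (0 : Fin (m + 2)) := rfl
    rw [hl, h0, smul_add]
    have hp : ((-1 : ℤ) ^ (m + 1 + 1)) = (-1 : ℤ) ^ m := by ring
    rw [hp]
    have hq : ((-1 : ℤ) ^ (m + 1)) • f (Fin.last m).castSucc
        = -(((-1 : ℤ) ^ m) • f (Fin.last m).castSucc) := by
      rw [← neg_smul]; congr 1; ring
    rw [hq]
    abel

/-- along any odd-length walk from `i` to `j` in a connected
non-bipartite signed graph, one can choose weights `b_ℓ ∈ {±1}` so that the weighted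
sum of the edge vectors is `e_i + e_j`. -/
theorem stmt6 {n : ℕ} (G : SGraph n) (hconn : G.Connected) (hnb : ¬ G.Bipartite)
    (i j : Fin n) (m : ℕ) (hm : Odd m)
    (w : Fin (m + 1) → Fin n) (es : Fin m → SEdge n)
    (hes : ∀ ℓ, es ℓ ∈ G.E)
    (hw0 : w 0 = i) (hwm : w (Fin.last m) = j)
    (hstep : ∀ ℓ : Fin m,
      ((es ℓ).1 = w ℓ.castSucc ∧ (es ℓ).2.1 = w ℓ.succ) ∨
      ((es ℓ).1 = w ℓ.succ ∧ (es ℓ).2.1 = w ℓ.castSucc)) :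
    ∃ b : Fin m → ℤ, (∀ ℓ, b ℓ = 1 ∨ b ℓ = -1) ∧
      ∑ ℓ, b ℓ • rhoZ (es ℓ) = (Pi.single i 1 + Pi.single j 1 : Fin n → ℤ) := by
  refine ⟨fun ℓ => ((-1 : ℤ) ^ (ℓ : ℕ)) * (es ℓ).2.2, ?_, ?_⟩
  · intro ℓ
    rcases G.sgn_unit _ (hes ℓ) with h | h <;>
      rcases Nat.even_or_odd (ℓ : ℕ) with he | he <;>
      simp [h, he.neg_one_pow]
  · have key : ∀ ℓ : Fin m, (((-1 : ℤ) ^ (ℓ : ℕ)) * (es ℓ).2.2) • rhoZ (es ℓ)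
        = ((-1 : ℤ) ^ (ℓ : ℕ)) •
          (Pi.single (w ℓ.castSucc) 1 + Pi.single (w ℓ.succ) 1 : Fin n → ℤ) := by
      intro ℓ
      have hs : (es ℓ).2.2 * (es ℓ).2.2 = 1 := by
        rcases G.sgn_unit _ (hes ℓ) with h | h <;> rw [h] <;> ring
      funext v
      simp only [Pi.smul_apply, Pi.add_apply, smul_eq_mul, rhoZ, Pi.single_apply]
      have ec : ∀ a : Fin n, (if a = v then (1 : ℤ) else 0) = (if v = a then 1 else 0) := by
        intro a
        rcases eq_or_ne a v with h | h
        · simp [h]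
        · simp [h, Ne.symm h]
      rcases hstep ℓ with ⟨h1, h2⟩ | ⟨h1, h2⟩ <;> rw [h1, h2, ec, ec] <;>
        linear_combination (((-1 : ℤ) ^ (ℓ : ℕ)) *
          ((if v = w ℓ.castSucc then (1 : ℤ) else 0) +
            (if v = w ℓ.succ then (1 : ℤ) else 0))) * hs
    simp only [key]
    rw [telescope m (fun k => Pi.single (w k) 1)]
    have : Even (m + 1) := Odd.add_one hm
    rw [this.neg_one_pow, one_smul, hw0, hwm]

end EdgeRing
end

section
/- Let G be a signed graph with bipartite components G_1, ..., G_k having bipartitions L_1 ∪ R_1, ..., L_k ∪ R_k. If v* ∈ (ℝ^n)* satisfies ⟨v*, ρ(e)⟩ = 0 for every edge e of G, then v* is a real linear combination of the dual vectors e_{L_1}* − e_{R_1}*, ..., e_{L_k}* − e_{R_k}*. -/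
open scoped BigOperators

namespace EdgeRing

variable {n : ℕ}

section Stmt7Aux

variable {n : ℕ} (G : SGraph n) {v : Fin n → ℝ}

lemma adj_symm : Symmetric G.adj := by
  rintro i j ⟨e, he, h⟩
  exact ⟨e, he, h.symm⟩

lemma compSet_closed {b w w' : Fin n} (hw : w ∈ G.compSet b) (h : G.adj w w') :
    w' ∈ G.compSet b := Relation.ReflTransGen.tail hw h

lemma compSet_eq {b x : Fin n} (h : x ∈ G.compSet b) : G.compSet b = G.compSet x := by
  have hs := (show Symmetric (Relation.ReflTransGen G.adj) from by haveI : Std.Symm G.adj := ⟨fun a b h => adj_symm G h⟩; exact fun a b h => Std.Symm.symm a b h)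
  ext u
  exact ⟨fun hu => (hs h).trans hu, fun hu => Relation.ReflTransGen.trans h hu⟩

lemma reach_of_mem_comp {Cs : Set (Fin n)} (hC : G.IsComp Cs) {u w : Fin n}
    (hu : u ∈ Cs) (hw : w ∈ Cs) : Relation.ReflTransGen G.adj u w := by
  obtain ⟨b, rfl⟩ := hC
  exact ((show Symmetric (Relation.ReflTransGen G.adj) from by haveI : Std.Symm G.adj := ⟨fun a b h => adj_symm G h⟩; exact fun a b h => Std.Symm.symm a b h) hu).trans hw

lemma sum_rho (v : Fin n → ℝ) (e : SEdge n) :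
    ∑ i, v i * rhoR e i = (e.2.2 : ℝ) * (v e.1 + v e.2.1) := by
  have h1 : ∀ j : Fin n, ∑ i, v i * (if j = i then (1:ℝ) else 0) = v j := by
    intro j; simp [mul_ite, Finset.sum_ite_eq]
  calc ∑ i, v i * rhoR e i
      = ∑ i, ((e.2.2 : ℝ) * (v i * (if e.1 = i then (1:ℝ) else 0))
          + (e.2.2 : ℝ) * (v i * (if e.2.1 = i then (1:ℝ) else 0))) := by
        refine Finset.sum_congr rfl fun i _ => ?_
        simp only [rhoR, rhoZ]
        push_cast
        ring
    _ = (e.2.2 : ℝ) * (v e.1 + v e.2.1) := by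
        rw [Finset.sum_add_distrib, ← Finset.mul_sum, ← Finset.mul_sum, h1, h1]
        ring

lemma edge_sum (hv : ∀ e ∈ G.E, ∑ i, v i * rhoR e i = 0) {e : SEdge n} (he : e ∈ G.E) :
    v e.1 + v e.2.1 = 0 := by
  have h := hv e he
  rw [sum_rho] at h
  rcases G.sgn_unit e he with hs | hs <;> rw [hs] at h <;> push_cast at h <;> linarith

lemma adj_val (hv : ∀ e ∈ G.E, ∑ i, v i * rhoR e i = 0) {i j : Fin n} (h : G.adj i j) :
    v j = - v i := by
  obtain ⟨e, he, hc⟩ := h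
  have h0 := edge_sum G hv he
  rcases hc with ⟨h1, h2⟩ | ⟨h1, h2⟩ <;> subst h1 <;> subst h2 <;> linarith

lemma walk_val (hv : ∀ e ∈ G.E, ∑ i, v i * rhoR e i = 0) {i w : Fin n}
    (h : Relation.ReflTransGen G.adj i w) : v w = v i ∨ v w = - v i := by
  induction h with
  | refl => exact Or.inl rfl
  | tail _ hadj ih =>
    rcases ih with h | h
    · right; rw [adj_val G hv hadj, h]
    · left; rw [adj_val G hv hadj, h, neg_neg]

lemma bipWith_symm {Cs L R : Set (Fin n)} (h : G.BipWith Cs L R) : G.BipWith Cs R L := by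
  obtain ⟨h1, h2, h3⟩ := h
  exact ⟨by rw [h1, Set.union_comm], h2.symm, fun e he hi => (h3 e he hi).symm⟩

lemma bip_walk (hv : ∀ e ∈ G.E, ∑ i, v i * rhoR e i = 0) {Cs L R : Set (Fin n)}
    (hb : G.BipWith Cs L R) {i w : Fin n} (hi : i ∈ L)
    (h : Relation.ReflTransGen G.adj i w) :
    (w ∈ L ∧ v w = v i) ∨ (w ∈ R ∧ v w = - v i) := by
  obtain ⟨hCs, hdisj, hcross⟩ := hb
  have hdl := Set.disjoint_left.mp hdisj
  induction h with
  | refl => exact Or.inl ⟨hi, rfl⟩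
  | @tail b c _ hadj ih =>
    have hvc : v c = - v b := adj_val G hv hadj
    obtain ⟨e, he, hc⟩ := hadj
    have hbC : b ∈ Cs := by
      rcases ih with ⟨hb1, _⟩ | ⟨hb1, _⟩ <;> rw [hCs]
      · exact Or.inl hb1
      · exact Or.inr hb1
    have hinc : incident e Cs := by
      rcases hc with ⟨h1, _⟩ | ⟨_, h2⟩
      · left; rw [h1]; exact hbC
      · right; rw [h2]; exact hbC
    have hcr := hcross e he hinc
    rcases ih with ⟨hbL, hvb⟩ | ⟨hbR, hvb⟩
    · refine Or.inr ⟨?_, by rw [hvc, hvb]⟩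
      rcases hc with ⟨h1, h2⟩ | ⟨h1, h2⟩ <;> subst h1 <;> subst h2 <;>
        rcases hcr with ⟨ha, hb2⟩ | ⟨ha, hb2⟩ <;>
          first
            | assumption
            | exact absurd ha (hdl hbL)
            | exact absurd hb2 (hdl hbL)
    · refine Or.inl ⟨?_, by rw [hvc, hvb, neg_neg]⟩
      rcases hc with ⟨h1, h2⟩ | ⟨h1, h2⟩ <;> subst h1 <;> subst h2 <;>
        rcases hcr with ⟨ha, hb2⟩ | ⟨ha, hb2⟩ <;>
          first
            | assumption
            | exact absurd hbR (hdl ha)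
            | exact absurd hbR (hdl hb2)

lemma comp_bip (hv : ∀ e ∈ G.E, ∑ i, v i * rhoR e i = 0) {w : Fin n} (hw : v w ≠ 0) :
    G.BipOn (G.compSet w) := by
  refine ⟨{u | u ∈ G.compSet w ∧ v u = v w}, {u | u ∈ G.compSet w ∧ v u = - v w},
    ?_, ?_, ?_⟩
  · ext u
    constructor
    · intro hu
      rcases walk_val G hv hu with h | h
      · exact Or.inl ⟨hu, h⟩
      · exact Or.inr ⟨hu, h⟩
    · rintro (⟨h, _⟩ | ⟨h, _⟩) <;> exact h
  · rw [Set.disjoint_left]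
    rintro u ⟨_, h1⟩ ⟨_, h2⟩
    rw [h1] at h2
    exact hw (by linarith)
  · intro e he hinc
    have hadj : G.adj e.1 e.2.1 := ⟨e, he, Or.inl ⟨rfl, rfl⟩⟩
    have h1 : e.1 ∈ G.compSet w ∧ e.2.1 ∈ G.compSet w := by
      rcases hinc with h | h
      · exact ⟨h, compSet_closed G h hadj⟩
      · exact ⟨compSet_closed G h (adj_symm G hadj), h⟩
    have hsum : v e.2.1 = - v e.1 := adj_val G hv hadj
    rcases walk_val G hv h1.1 with h | h
    · exact Or.inl ⟨⟨h1.1, h⟩, ⟨h1.2, by rw [hsum, h]⟩⟩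
    · exact Or.inr ⟨⟨h1.1, h⟩, ⟨h1.2, by rw [hsum, h, neg_neg]⟩⟩

end Stmt7Aux

/-- a linear form vanishing on all edge vectors is a linear combination
of the dual vectors `e_{L_t}^* - e_{R_t}^*` of the bipartite components. -/
theorem stmt7 {n : ℕ} (G : SGraph n) (k : ℕ) (C L R : Fin k → Set (Fin n))
    (hcomp : ∀ t, G.IsComp (C t)) (hbip : ∀ t, G.BipWith (C t) (L t) (R t))
    (hinj : Function.Injective C)
    (hall : ∀ D, G.IsComp D → G.BipOn D → ∃ t, D = C t)
    (v : Fin n → ℝ) (hv : ∀ e ∈ G.E, ∑ i, v i * rhoR e i = 0) :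
    ∃ c : Fin k → ℝ, v = ∑ t, c t • dvec (L t) (R t) := by
  classical
  have hLsub : ∀ t, L t ⊆ C t := fun t x hx => by rw [(hbip t).1]; exact Or.inl hx
  have hRsub : ∀ t, R t ⊆ C t := fun t x hx => by rw [(hbip t).1]; exact Or.inr hx
  have hdisjC : ∀ t t', t ≠ t' → ∀ x, x ∈ C t → x ∉ C t' := by
    intro t t' htt x hx hx'
    apply htt
    apply hinj
    obtain ⟨b, hb⟩ := hcomp t
    obtain ⟨b', hb'⟩ := hcomp t'
    rw [hb, hb']
    rw [hb] at hx; rw [hb'] at hx'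
    rw [compSet_eq G hx, compSet_eq G hx']
  -- constancy lemmas
  have hconstL : ∀ t, ∀ u ∈ L t, ∀ w ∈ L t, v w = v u := by
    intro t u hu w hw
    have hr := reach_of_mem_comp G (hcomp t) (hLsub t hu) (hLsub t hw)
    rcases bip_walk G hv (hbip t) hu hr with ⟨_, h⟩ | ⟨hwR, _⟩
    · exact h
    · exact absurd hwR (Set.disjoint_left.mp (hbip t).2.1 hw)
  have hconstLR : ∀ t, ∀ u ∈ L t, ∀ w ∈ R t, v w = - v u := by
    intro t u hu w hw
    have hr := reach_of_mem_comp G (hcomp t) (hLsub t hu) (hRsub t hw)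
    rcases bip_walk G hv (hbip t) hu hr with ⟨hwL, _⟩ | ⟨_, h⟩
    · exact absurd hw (Set.disjoint_left.mp (hbip t).2.1 hwL)
    · exact h
  have hconstR : ∀ t, ∀ u ∈ R t, ∀ w ∈ R t, v w = v u := by
    intro t u hu w hw
    have hr := reach_of_mem_comp G (hcomp t) (hRsub t hu) (hRsub t hw)
    rcases bip_walk G hv (bipWith_symm G (hbip t)) hu hr with ⟨_, h⟩ | ⟨hwL, _⟩
    · exact h
    · exact absurd hw (Set.disjoint_left.mp (hbip t).2.1 hwL)
  refine ⟨fun t =>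
    if h : (L t).Nonempty then v h.some
    else if h' : (R t).Nonempty then - v h'.some else 0, ?_⟩
  set c : Fin k → ℝ := fun t =>
    if h : (L t).Nonempty then v h.some
    else if h' : (R t).Nonempty then - v h'.some else 0 with hcdef
  funext w
  rw [Fintype.sum_apply]
  simp only [Pi.smul_apply, smul_eq_mul, dvec]
  by_cases hex : ∃ t, w ∈ C t
  · obtain ⟨t₀, ht₀⟩ := hex
    rw [Finset.sum_eq_single t₀]
    · rcases ((hbip t₀).1 ▸ ht₀ : w ∈ L t₀ ∪ R t₀) with hwL | hwR
      · have hwnR : w ∉ R t₀ := Set.disjoint_left.mp (hbip t₀).2.1 hwL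
        rw [Set.indicator_of_mem hwL, Set.indicator_of_notMem hwnR]
        have hne : (L t₀).Nonempty := ⟨w, hwL⟩
        have : c t₀ = v hne.some := by rw [hcdef]; exact dif_pos hne
        rw [this, hconstL t₀ hne.some hne.some_mem w hwL]
        ring
      · have hwnL : w ∉ L t₀ := fun hx => Set.disjoint_left.mp (hbip t₀).2.1 hx hwR
        rw [Set.indicator_of_notMem hwnL, Set.indicator_of_mem hwR]
        by_cases hne : (L t₀).Nonempty
        · have : c t₀ = v hne.some := by rw [hcdef]; exact dif_pos hne
          rw [this, hconstLR t₀ hne.some hne.some_mem w hwR]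
          ring
        · have hne' : (R t₀).Nonempty := ⟨w, hwR⟩
          have : c t₀ = - v hne'.some := by
            rw [hcdef]
            simp only
            rw [dif_neg hne, dif_pos hne']
          rw [this, hconstR t₀ hne'.some hne'.some_mem w hwR]
          ring
    · intro t _ htne
      have hwn : w ∉ C t := fun hx => hdisjC t t₀ htne w hx ht₀
      rw [Set.indicator_of_notMem (fun hx => hwn (hLsub t hx)),
        Set.indicator_of_notMem (fun hx => hwn (hRsub t hx))]
      ring
    · intro h
      exact absurd (Finset.mem_univ t₀) h
  · push_neg at hex
    have hw0 : v w = 0 := by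
      by_contra hw
      obtain ⟨t, ht⟩ := hall (G.compSet w) ⟨w, rfl⟩ (comp_bip G hv hw)
      exact hex t (ht ▸ Relation.ReflTransGen.refl)
    rw [hw0]
    symm
    apply Finset.sum_eq_zero
    intro t _
    rw [Set.indicator_of_notMem (fun hx => hex t (hLsub t hx)),
      Set.indicator_of_notMem (fun hx => hex t (hRsub t hx))]
    ring

end EdgeRing
end

section
/- Let G be a signed graph such that some facet subgraph H of G satisfies comp(H) > comp(G) + 1, where comp denotes the number of connected components. Then there exist two non-bipartite components H_1, H_2 of H lying in the same (non-bipartite) component of G; and for any i ∈ V(H_1), j ∈ V(H_2), the vector e_i + e_j lies in ℤρ(E(G)) and in the supporting hyperplane of the facet cone(P_H), but not in ℤρ(E(H)). -/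
open scoped BigOperators

namespace EdgeRing

variable {n : ℕ}

section Stmt13Helpers

variable {n : ℕ}

lemma SGraph.adj_symm (G : SGraph n) {i j : Fin n} (h : G.adj i j) : G.adj j i := by
  obtain ⟨e, he, h⟩ := h
  exact ⟨e, he, h.symm⟩

lemma SGraph.reach_symm (G : SGraph n) : Symmetric (Relation.ReflTransGen G.adj) :=
  by haveI : Std.Symm G.adj := ⟨fun _ _ h => G.adj_symm h⟩; exact fun a b h => Std.Symm.symm a b h

lemma SGraph.compSet_eq_of_mem (G : SGraph n) {v w : Fin n} (h : w ∈ G.compSet v) :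
    G.compSet w = G.compSet v := by
  ext u
  exact ⟨fun hu => h.trans hu, fun hu => (G.reach_symm h).trans hu⟩

lemma SGraph.isComp_disjoint (G : SGraph n) {C1 C2 : Set (Fin n)} (h1 : G.IsComp C1)
    (h2 : G.IsComp C2) (hne : C1 ≠ C2) : ∀ x, x ∈ C1 → x ∉ C2 := by
  obtain ⟨v, rfl⟩ := h1; obtain ⟨w, rfl⟩ := h2
  intro x hx hx2
  exact hne (by rw [← G.compSet_eq_of_mem hx, ← G.compSet_eq_of_mem hx2])

lemma SGraph.mem_of_adj {G : SGraph n} {C : Set (Fin n)} (hC : G.IsComp C) {a b : Fin n}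
    (ha : a ∈ C) (hab : G.adj a b) : b ∈ C := by
  obtain ⟨v, rfl⟩ := hC
  exact ha.tail hab

lemma SGraph.adj_of_edge {G : SGraph n} {e : SEdge n} (he : e ∈ G.E) : G.adj e.1 e.2.1 :=
  ⟨e, he, Or.inl ⟨rfl, rfl⟩⟩

lemma edge_sum_mem {G : SGraph n} {a b : Fin n} (h : G.adj a b) :
    (Pi.single a 1 + Pi.single b 1 : Fin n → ℤ) ∈ G.lattice := by
  obtain ⟨e, he, hor⟩ := h
  have hgen : rhoZ e ∈ G.lattice := AddSubgroup.subset_closure ⟨e, he, rfl⟩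
  have key : (Pi.single e.1 1 + Pi.single e.2.1 1 : Fin n → ℤ) ∈ G.lattice := by
    rcases G.sgn_unit e he with hs | hs
    · have heq : rhoZ e = (Pi.single e.1 1 + Pi.single e.2.1 1 : Fin n → ℤ) := by
        funext v
        by_cases h1 : e.1 = v <;> by_cases h2 : e.2.1 = v <;>
          simp_all [rhoZ, Pi.single_apply, eq_comm]
      rwa [heq] at hgen
    · have heq : -rhoZ e = (Pi.single e.1 1 + Pi.single e.2.1 1 : Fin n → ℤ) := by
        funext v
        by_cases h1 : e.1 = v <;> by_cases h2 : e.2.1 = v <;>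
          simp_all [rhoZ, Pi.single_apply, eq_comm]
      rw [← heq]
      exact neg_mem hgen
  rcases hor with ⟨h1, h2⟩ | ⟨h1, h2⟩
  · rwa [h1, h2] at key
  · rw [h1, h2] at key
    rwa [add_comm] at key

lemma walk_lattice {G : SGraph n} {i j : Fin n} (h : Relation.ReflTransGen G.adj i j) :
    (Pi.single i 1 - Pi.single j 1 : Fin n → ℤ) ∈ G.lattice ∨
      (Pi.single i 1 + Pi.single j 1 : Fin n → ℤ) ∈ G.lattice := by
  induction h with
  | refl => left; rw [sub_self]; exact zero_mem _
  | @tail b c _ hbc ih =>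
    have hedge := edge_sum_mem hbc
    rcases ih with ih | ih
    · right
      have heq : (Pi.single i 1 + Pi.single c 1 : Fin n → ℤ)
          = (Pi.single i 1 - Pi.single b 1) + (Pi.single b 1 + Pi.single c 1) := by abel
      rw [heq]; exact add_mem ih hedge
    · left
      have heq : (Pi.single i 1 - Pi.single c 1 : Fin n → ℤ)
          = (Pi.single i 1 + Pi.single b 1) - (Pi.single b 1 + Pi.single c 1) := by abel
      rw [heq]; exact sub_mem ih hedge

lemma nonbip_sum_mem {G : SGraph n} {v : Fin n} (hnb : ¬ G.BipOn (G.compSet v))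
    {i j : Fin n} (hi : i ∈ G.compSet v) (hj : j ∈ G.compSet v) :
    (Pi.single i 1 + Pi.single j 1 : Fin n → ℤ) ∈ G.lattice := by
  classical
  by_cases hsplit : ∃ w, (Pi.single v 1 - Pi.single w 1 : Fin n → ℤ) ∈ G.lattice ∧
      (Pi.single v 1 + Pi.single w 1 : Fin n → ℤ) ∈ G.lattice
  · obtain ⟨w, hw1, hw2⟩ := hsplit
    have h2v : (Pi.single v 1 + Pi.single v 1 : Fin n → ℤ) ∈ G.lattice := by
      have heq : (Pi.single v 1 + Pi.single v 1 : Fin n → ℤ)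
          = (Pi.single v 1 - Pi.single w 1) + (Pi.single v 1 + Pi.single w 1) := by abel
      rw [heq]; exact add_mem hw1 hw2
    have h2 : ∀ u, u ∈ G.compSet v →
        (Pi.single u 1 + Pi.single u 1 : Fin n → ℤ) ∈ G.lattice := by
      intro u hu
      rcases walk_lattice hu with h | h
      · have heq : (Pi.single u 1 + Pi.single u 1 : Fin n → ℤ)
            = (Pi.single v 1 + Pi.single v 1) - (Pi.single v 1 - Pi.single u 1)
              - (Pi.single v 1 - Pi.single u 1) := by abel
        rw [heq]; exact sub_mem (sub_mem h2v h) h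
      · have heq : (Pi.single u 1 + Pi.single u 1 : Fin n → ℤ)
            = (Pi.single v 1 + Pi.single u 1) + (Pi.single v 1 + Pi.single u 1)
              - (Pi.single v 1 + Pi.single v 1) := by abel
        rw [heq]; exact sub_mem (add_mem h h) h2v
    have hij : Relation.ReflTransGen G.adj i j := (G.reach_symm hi).trans hj
    rcases walk_lattice hij with h | h
    · have heq : (Pi.single i 1 + Pi.single j 1 : Fin n → ℤ)
          = (Pi.single i 1 - Pi.single j 1) + (Pi.single j 1 + Pi.single j 1) := by abel
      rw [heq]
      exact add_mem h (h2 j hj)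
    · exact h
  · exfalso
    push_neg at hsplit
    apply hnb
    refine ⟨{w | w ∈ G.compSet v ∧ (Pi.single v 1 - Pi.single w 1 : Fin n → ℤ) ∈ G.lattice},
      {w | w ∈ G.compSet v ∧ (Pi.single v 1 + Pi.single w 1 : Fin n → ℤ) ∈ G.lattice},
      ?_, ?_, ?_⟩
    · ext w
      constructor
      · intro hw
        rcases walk_lattice hw with h | h
        · exact Or.inl ⟨hw, h⟩
        · exact Or.inr ⟨hw, h⟩
      · rintro (⟨h, _⟩ | ⟨h, _⟩) <;> exact h
    · rw [Set.disjoint_left]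
      rintro w ⟨_, h1⟩ ⟨_, h2⟩
      exact hsplit w h1 h2
    · rintro e he hinc
      have hadj : G.adj e.1 e.2.1 := SGraph.adj_of_edge he
      have hboth : e.1 ∈ G.compSet v ∧ e.2.1 ∈ G.compSet v := by
        rcases hinc with h | h
        · exact ⟨h, h.tail hadj⟩
        · exact ⟨h.tail (G.adj_symm hadj), h⟩
      have hsum := edge_sum_mem hadj
      rcases walk_lattice hboth.1 with h | h
      · left
        refine ⟨⟨hboth.1, h⟩, hboth.2, ?_⟩
        have heq : (Pi.single v 1 + Pi.single e.2.1 1 : Fin n → ℤ)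
            = (Pi.single v 1 - Pi.single e.1 1) + (Pi.single e.1 1 + Pi.single e.2.1 1) := by
          abel
        rw [heq]; exact add_mem h hsum
      · right
        refine ⟨⟨hboth.1, h⟩, hboth.2, ?_⟩
        have heq : (Pi.single v 1 - Pi.single e.2.1 1 : Fin n → ℤ)
            = (Pi.single v 1 + Pi.single e.1 1) - (Pi.single e.1 1 + Pi.single e.2.1 1) := by
          abel
        rw [heq]; exact sub_mem h hsum

open Classical in
lemma lattice_sum_even (G : SGraph n) {C : Set (Fin n)} (hC : G.IsComp C)
    {x : Fin n → ℤ} (hx : x ∈ G.lattice) :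
    (2 : ℤ) ∣ ∑ v, if v ∈ C then x v else 0 := by
  classical
  induction hx using AddSubgroup.closure_induction with
  | mem g hg =>
    obtain ⟨e, he, rfl⟩ := hg
    have hiff : e.1 ∈ C ↔ e.2.1 ∈ C :=
      ⟨fun h => SGraph.mem_of_adj hC h (SGraph.adj_of_edge he),
       fun h => SGraph.mem_of_adj hC h (G.adj_symm (SGraph.adj_of_edge he))⟩
    have h1 : ∀ v, (if v ∈ C then rhoZ e v else 0)
        = e.2.2 * ((if e.1 = v then (if e.1 ∈ C then (1:ℤ) else 0) else 0)
          + (if e.2.1 = v then (if e.2.1 ∈ C then 1 else 0) else 0)) := by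
      intro v
      by_cases h1v : e.1 = v <;> by_cases h2v : e.2.1 = v <;>
        by_cases hvC : v ∈ C <;> simp_all [rhoZ]
    have hcalc : (∑ v, if v ∈ C then rhoZ e v else 0)
        = e.2.2 * ((if e.1 ∈ C then (1:ℤ) else 0) + (if e.2.1 ∈ C then 1 else 0)) := by
      rw [Finset.sum_congr rfl fun v _ => h1 v, ← Finset.mul_sum,
        Finset.sum_add_distrib, Finset.sum_ite_eq, Finset.sum_ite_eq]
      simp
    rw [hcalc]
    by_cases h : e.1 ∈ C
    · have h' : e.2.1 ∈ C := hiff.mp h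
      simp only [h, h', if_pos]
      exact Dvd.dvd.mul_left (by norm_num) e.2.2
    · have h' : e.2.1 ∉ C := fun hh => h (hiff.mpr hh)
      simp [h, h']
  | zero => simp
  | add x y _ _ hx hy =>
    have heq : (∑ v, if v ∈ C then (x + y) v else 0)
        = (∑ v, if v ∈ C then x v else 0) + (∑ v, if v ∈ C then y v else 0) := by
      rw [← Finset.sum_add_distrib]
      refine Finset.sum_congr rfl fun v _ => ?_
      by_cases hv : v ∈ C <;> simp [hv]
    rw [heq]
    exact dvd_add hx hy
  | neg x _ hx =>
    have heq : (∑ v, if v ∈ C then (-x) v else 0)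
        = -(∑ v, if v ∈ C then x v else 0) := by
      rw [← Finset.sum_neg_distrib]
      refine Finset.sum_congr rfl fun v _ => ?_
      by_cases hv : v ∈ C <;> simp [hv]
    rw [heq]
    exact dvd_neg.mpr hx

open Classical in
lemma sum_single_pair (C : Set (Fin n)) (i j : Fin n) :
    (∑ v, if v ∈ C then (Pi.single i 1 + Pi.single j 1 : Fin n → ℤ) v else 0)
      = (if i ∈ C then 1 else 0) + (if j ∈ C then 1 else 0) := by
  classical
  have h1 : ∀ v, (if v ∈ C then (Pi.single i 1 + Pi.single j 1 : Fin n → ℤ) v else 0)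
      = (if i = v then (if i ∈ C then (1:ℤ) else 0) else 0)
        + (if j = v then (if j ∈ C then 1 else 0) else 0) := by
    intro v
    by_cases h1v : i = v <;> by_cases h2v : j = v <;> by_cases hvC : v ∈ C <;>
      simp_all [Pi.single_apply, eq_comm]
  rw [Finset.sum_congr rfl fun v _ => h1 v, Finset.sum_add_distrib,
    Finset.sum_ite_eq, Finset.sum_ite_eq]
  simp

lemma bipOn_restrict {G H : SGraph n} (hsub : H.E ⊆ G.E) {C D L R : Set (Fin n)}
    (hC : H.IsComp C) (hCD : C ⊆ D) (hbip : G.BipWith D L R) : H.BipOn C := by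
  obtain ⟨hDLR, hdisj, hcross⟩ := hbip
  refine ⟨L ∩ C, R ∩ C, ?_, ?_, ?_⟩
  · ext w
    constructor
    · intro hw
      have hw' : w ∈ L ∪ R := hDLR ▸ hCD hw
      rcases hw' with h | h
      · exact Or.inl ⟨h, hw⟩
      · exact Or.inr ⟨h, hw⟩
    · rintro (⟨_, h⟩ | ⟨_, h⟩) <;> exact h
  · exact hdisj.mono Set.inter_subset_left Set.inter_subset_left
  · intro e he hinc
    have hadj := SGraph.adj_of_edge (G := H) he
    have hboth : e.1 ∈ C ∧ e.2.1 ∈ C := by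
      rcases hinc with h | h
      · exact ⟨h, SGraph.mem_of_adj hC h hadj⟩
      · exact ⟨SGraph.mem_of_adj hC h (H.adj_symm hadj), h⟩
    have hincD : incident e D := Or.inl (hCD hboth.1)
    rcases hcross e (hsub he) hincD with ⟨h1, h2⟩ | ⟨h1, h2⟩
    · exact Or.inl ⟨⟨h1, hboth.1⟩, h2, hboth.2⟩
    · exact Or.inr ⟨⟨h1, hboth.1⟩, h2, hboth.2⟩

lemma compSet_mono {G H : SGraph n} (hsub : H.E ⊆ G.E) (v : Fin n) :
    H.compSet v ⊆ G.compSet v := by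
  intro w hw
  refine Relation.ReflTransGen.mono ?_ _ _ hw
  rintro a b ⟨e, he, h⟩
  exact ⟨e, hsub he, h⟩

lemma comp_split (G : SGraph n) :
    G.comp = G.bicomp + {C : Set (Fin n) | G.IsComp C ∧ ¬ G.BipOn C}.ncard := by
  classical
  have h1 : G.comp = {C : Set (Fin n) | G.IsComp C}.ncard := by
    rw [← Nat.card_coe_set_eq]; rfl
  have h2 : G.bicomp = {C : Set (Fin n) | G.IsComp C ∧ G.BipOn C}.ncard := by
    rw [← Nat.card_coe_set_eq]; rfl
  have hsplit : {C : Set (Fin n) | G.IsComp C}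
      = {C : Set (Fin n) | G.IsComp C ∧ G.BipOn C}
        ∪ {C : Set (Fin n) | G.IsComp C ∧ ¬ G.BipOn C} := by
    ext C
    by_cases h : G.BipOn C <;> simp [h]
  have hdisj : Disjoint {C : Set (Fin n) | G.IsComp C ∧ G.BipOn C}
      {C : Set (Fin n) | G.IsComp C ∧ ¬ G.BipOn C} := by
    rw [Set.disjoint_left]
    rintro C ⟨_, h⟩ ⟨_, h'⟩
    exact h' h
  rw [h1, h2, hsplit, Set.ncard_union_eq hdisj (Set.toFinite _) (Set.toFinite _)]

lemma dvec_sum (L R : Set (Fin n)) {i j : Fin n} (hiL : i ∉ L) (hiR : i ∉ R)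
    (hjL : j ∉ L) (hjR : j ∉ R) :
    ∑ v, dvec L R v * toR (Pi.single i 1 + Pi.single j 1 : Fin n → ℤ) v = 0 := by
  classical
  apply Finset.sum_eq_zero
  intro v _
  by_cases hvi : v = i
  · subst hvi
    have hz : dvec L R v = 0 := by
      simp only [dvec]
      rw [Set.indicator_of_notMem hiL, Set.indicator_of_notMem hiR, sub_zero]
    rw [hz, zero_mul]
  · by_cases hvj : v = j
    · subst hvj
      have hz : dvec L R v = 0 := by
        simp only [dvec]
        rw [Set.indicator_of_notMem hjL, Set.indicator_of_notMem hjR, sub_zero]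
      rw [hz, zero_mul]
    · have hz : toR (Pi.single i 1 + Pi.single j 1 : Fin n → ℤ) v = 0 := by
        simp [toR, Pi.single_apply, hvi, hvj]
      rw [hz, mul_zero]

end Stmt13Helpers

/-- if a facet subgraph has more than `comp(G) + 1` components, then two
non-bipartite components of `H` lie in one non-bipartite component of `G`, and for
vertices `i, j` in them, `e_i + e_j ∈ ℤρ(E(G))`, it lies in the supporting hyperplane
of the facet, but `e_i + e_j ∉ ℤρ(E(H))`. -/
theorem stmt13 {n : ℕ} (G H : SGraph n) (hfs : IsFacetSubgraph G H)
    (hgt : H.comp > G.comp + 1) :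
    ∃ C1 C2 : Set (Fin n), H.IsComp C1 ∧ H.IsComp C2 ∧ C1 ≠ C2 ∧
      ¬ H.BipOn C1 ∧ ¬ H.BipOn C2 ∧
      (∃ D, G.IsComp D ∧ ¬ G.BipOn D ∧ C1 ⊆ D ∧ C2 ⊆ D) ∧
      ∀ i ∈ C1, ∀ j ∈ C2,
        (Pi.single i 1 + Pi.single j 1 : Fin n → ℤ) ∈ G.lattice ∧
        (Pi.single i 1 + Pi.single j 1 : Fin n → ℤ) ∉ H.lattice ∧
        ∀ C L R, H.IsComp C → ¬ G.IsComp C → FacetWitness G H C L R →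
          ∑ v, dvec L R v * toR (Pi.single i 1 + Pi.single j 1 : Fin n → ℤ) v = 0 := by
  classical
  obtain ⟨hsub, hbic, hwit⟩ := hfs
  have hcardH := comp_split H
  have hcardG := comp_split G
  have hlt : {C : Set (Fin n) | G.IsComp C ∧ ¬ G.BipOn C}.ncard
      < {C : Set (Fin n) | H.IsComp C ∧ ¬ H.BipOn C}.ncard := by omega
  set f : Set (Fin n) → Set (Fin n) :=
    fun C => if h : H.IsComp C then G.compSet h.choose else ∅ with hf
  have hprops : ∀ C ∈ {C : Set (Fin n) | H.IsComp C ∧ ¬ H.BipOn C},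
      f C ∈ {C : Set (Fin n) | G.IsComp C ∧ ¬ G.BipOn C} ∧ C ⊆ f C := by
    rintro C ⟨hC, hCnb⟩
    have hfC : f C = G.compSet hC.choose := by rw [hf]; simp [hC]
    have hCsub : C ⊆ f C := by
      rw [hfC]
      intro w hw
      have := hC.choose_spec ▸ hw
      exact compSet_mono hsub hC.choose this
    refine ⟨⟨⟨hC.choose, hfC⟩, ?_⟩, hCsub⟩
    rintro ⟨L, R, hb⟩
    exact hCnb (bipOn_restrict hsub hC (hfC ▸ hCsub) hb)
  obtain ⟨C1, hC1, C2, hC2, hne, hfeq⟩ :=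
    Set.exists_ne_map_eq_of_ncard_lt_of_maps_to hlt
      (fun C hC => (hprops C hC).1) (Set.toFinite _)
  obtain ⟨hC1c, hC1nb⟩ := hC1
  obtain ⟨hC2c, hC2nb⟩ := hC2
  obtain ⟨⟨hDc, hDnb⟩, hC1D⟩ := hprops C1 ⟨hC1c, hC1nb⟩
  have hC2D : C2 ⊆ f C1 := hfeq ▸ (hprops C2 ⟨hC2c, hC2nb⟩).2
  refine ⟨C1, C2, hC1c, hC2c, hne, hC1nb, hC2nb, ⟨f C1, hDc, hDnb, hC1D, hC2D⟩, ?_⟩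
  intro i hi j hj
  refine ⟨?_, ?_, ?_⟩
  · -- in G.lattice
    obtain ⟨w, hw⟩ := hDc
    rw [hw] at hDnb hC1D hC2D
    exact nonbip_sum_mem hDnb (hC1D hi) (hC2D hj)
  · -- not in H.lattice
    intro hmem
    have heven := lattice_sum_even H hC1c hmem
    rw [sum_single_pair] at heven
    have hjC1 : j ∉ C1 := H.isComp_disjoint hC2c hC1c hne.symm j hj
    rw [if_pos hi, if_neg hjC1] at heven
    omega
  · -- hyperplane
    intro C L R hCc hCnG hw
    have hCbip : H.BipOn C := ⟨L, R, hw.1⟩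
    have hC1ne : C ≠ C1 := fun h => hC1nb (h ▸ hCbip)
    have hC2ne : C ≠ C2 := fun h => hC2nb (h ▸ hCbip)
    have hiC : i ∉ C := fun h => H.isComp_disjoint hCc hC1c hC1ne i h hi
    have hjC : j ∉ C := fun h => H.isComp_disjoint hCc hC2c hC2ne j h hj
    have hLC : L ⊆ C := by rw [hw.1.1]; exact Set.subset_union_left
    have hRC : R ⊆ C := by rw [hw.1.1]; exact Set.subset_union_right
    exact dvec_sum L R (fun h => hiC (hLC h)) (fun h => hiC (hRC h))
      (fun h => hjC (hLC h)) (fun h => hjC (hRC h))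

end EdgeRing
end

section
/- Let G be a mixed signed, directed graph on n vertices and let G̃ be its augmented signed graph (each directed edge (i,j) replaced by an artificial vertex t and signed edges −it, +tj). For a ∈ ℤ^n, define ã ∈ ℤ^{n+m} by extending a with zeros on artificial vertices. Then the vector-sum characterization holds: if G is connected and G̃ is not bipartite, then a ∈ ℤρ(E(G)) if and only if Σ_{i=1}^n a_i is even; if G̃ is bipartite with bipartition L̃ ∪ R̃ and L = L̃ ∩ V(G), R = R̃ ∩ V(G), then a ∈ ℤρ(E(G)) if and only if Σ_{i∈L} a_i = Σ_{j∈R} a_j. -/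
open scoped BigOperators

namespace EdgeRing

variable {n : ℕ}

/-! ### Auxiliary lemmas for stmt17 -/

section Stmt17Aux

variable {n : ℕ}

/-- weighted sum homomorphism -/
def wsum (ε : Fin n → ℤ) : (Fin n → ℤ) →+ ℤ where
  toFun x := ∑ i, ε i * x i
  map_zero' := by simp
  map_add' x y := by simp [mul_add, Finset.sum_add_distrib]

lemma wsum_apply (ε x : Fin n → ℤ) : wsum ε x = ∑ i, ε i * x i := rfl

lemma wsum_single (ε : Fin n → ℤ) (i : Fin n) (c : ℤ) :
    wsum ε (Pi.single i c) = ε i * c := by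
  rw [wsum_apply]
  simp [Pi.single_apply, mul_ite, Finset.sum_ite_eq']

lemma wsum_rhoZ (ε : Fin n → ℤ) (e : SEdge n) :
    wsum ε (rhoZ e) = e.2.2 * (ε e.1 + ε e.2.1) := by
  rw [wsum_apply]
  have : ∀ v, ε v * rhoZ e v =
      (if e.1 = v then e.2.2 * ε v else 0) + (if e.2.1 = v then e.2.2 * ε v else 0) := by
    intro v
    simp only [rhoZ]
    split_ifs <;> ring
  simp only [this, Finset.sum_add_distrib, Finset.sum_ite_eq, Finset.mem_univ, if_true]
  ring

lemma wsum_rhoD (ε : Fin n → ℤ) (e : Fin n × Fin n) :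
    wsum ε (rhoD e) = ε e.2 - ε e.1 := by
  rw [wsum_apply]
  have : ∀ v, ε v * rhoD e v =
      (if e.2 = v then ε v else 0) - (if e.1 = v then ε v else 0) := by
    intro v
    simp only [rhoD]
    split_ifs <;> ring
  simp only [this, Finset.sum_sub_distrib, Finset.sum_ite_eq, Finset.mem_univ, if_true]

lemma lattice_wsum {G : MGraph n} (ε : Fin n → ℤ) (H : AddSubgroup ℤ)
    (h : ∀ x ∈ G.rhoZSet, wsum ε x ∈ H) {a : Fin n → ℤ} (ha : a ∈ G.lattice) :
    wsum ε a ∈ H := by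
  have hle : G.lattice ≤ H.comap (wsum ε) :=
    (AddSubgroup.closure_le _).2 (fun x hx => h x hx)
  exact hle ha

lemma se_mem {G : MGraph n} {e : SEdge n} (he : e ∈ G.SE) :
    (Pi.single e.1 1 + Pi.single e.2.1 1 : Fin n → ℤ) ∈ G.lattice := by
  have hg : rhoZ e ∈ G.lattice := AddSubgroup.subset_closure (Or.inl ⟨e, he, rfl⟩)
  have hite : ∀ (x v : Fin n), (if x = v then (1 : ℤ) else 0) = (if v = x then 1 else 0) :=
    fun x v => if_congr eq_comm rfl rfl
  have hfun : rhoZ e = e.2.2 • (Pi.single e.1 1 + Pi.single e.2.1 1 : Fin n → ℤ) := by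
    funext v
    simp only [rhoZ, Pi.smul_apply, Pi.add_apply, Pi.single_apply, smul_eq_mul, hite]
  rcases G.sgn_unit e he with hs | hs
  · rw [hfun, hs, one_smul] at hg; exact hg
  · have hneg := G.lattice.neg_mem hg
    rw [hfun, hs] at hneg
    simpa [add_comm] using hneg

lemma de_mem {G : MGraph n} {e : Fin n × Fin n} (he : e ∈ G.DE) :
    (Pi.single e.2 1 - Pi.single e.1 1 : Fin n → ℤ) ∈ G.lattice := by
  have hg : rhoD e ∈ G.lattice := AddSubgroup.subset_closure (Or.inr ⟨e, he, rfl⟩)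
  have hite : ∀ (x v : Fin n), (if x = v then (1 : ℤ) else 0) = (if v = x then 1 else 0) :=
    fun x v => if_congr eq_comm rfl rfl
  have hfun : rhoD e = (Pi.single e.2 1 - Pi.single e.1 1 : Fin n → ℤ) := by
    funext v
    simp only [rhoD, Pi.sub_apply, Pi.single_apply, hite]
  rw [← hfun]; exact hg

lemma sign_conn {G : MGraph n} (hconn : G.Connected) (i j : Fin n) :
    ∃ s : ℤ, (s = 1 ∨ s = -1) ∧
      (Pi.single i 1 - s • Pi.single j 1 : Fin n → ℤ) ∈ G.lattice := by
  have h := hconn i j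
  induction h with
  | refl => exact ⟨1, Or.inl rfl, by rw [one_smul, sub_self]; exact G.lattice.zero_mem⟩
  | @tail b c hib hbc ih =>
    obtain ⟨s, hs, hm⟩ := ih
    have hstep : ∃ t : ℤ, (t = 1 ∨ t = -1) ∧
        (Pi.single b 1 - t • Pi.single c 1 : Fin n → ℤ) ∈ G.lattice := by
      rcases hbc with ⟨e, he, hor⟩ | ⟨e, he, hor⟩
      · have hm2 := se_mem he
        refine ⟨-1, Or.inr rfl, ?_⟩
        rcases hor with ⟨h1, h2⟩ | ⟨h1, h2⟩ <;> rw [h1, h2] at hm2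
        · convert hm2 using 1; module
        · convert hm2 using 1; module
      · have hm2 := de_mem he
        refine ⟨1, Or.inl rfl, ?_⟩
        rcases hor with ⟨h1, h2⟩ | ⟨h1, h2⟩ <;> rw [h1, h2] at hm2
        · have := G.lattice.neg_mem hm2
          convert this using 1; module
        · convert hm2 using 1; module
    obtain ⟨t, ht, hm2⟩ := hstep
    refine ⟨s * t, ?_, ?_⟩
    · rcases hs with h | h <;> rcases ht with h' | h' <;> simp [h, h']
    · have hadd := G.lattice.add_mem hm (G.lattice.zsmul_mem hm2 s)
      convert hadd using 1; module

lemma decomp {Λ : AddSubgroup (Fin n → ℤ)} (s : Fin n → ℤ) (w : Fin n → ℤ)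
    (h : ∀ i, (Pi.single i 1 : Fin n → ℤ) - s i • w ∈ Λ) (a : Fin n → ℤ) :
    a - (∑ i, a i * s i) • w ∈ Λ := by
  have hsingle : ∀ i : Fin n, a i • ((Pi.single i 1 : Fin n → ℤ)) = Pi.single i (a i) := by
    intro i; funext v
    simp [Pi.single_apply, mul_ite]
  have key : a - (∑ i, a i * s i) • w
      = ∑ i, a i • ((Pi.single i 1 : Fin n → ℤ) - s i • w) := by
    have h1 : ∑ i, a i • ((Pi.single i 1 : Fin n → ℤ)) = a := by
      simp only [hsingle]; exact Finset.univ_sum_single a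
    calc a - (∑ i, a i * s i) • w
        = (∑ i, a i • ((Pi.single i 1 : Fin n → ℤ))) - ∑ i, (a i * s i) • w := by
          rw [h1, Finset.sum_smul]
      _ = ∑ i, (a i • ((Pi.single i 1 : Fin n → ℤ)) - (a i * s i) • w) := by
          rw [Finset.sum_sub_distrib]
      _ = ∑ i, a i • ((Pi.single i 1 : Fin n → ℤ) - s i • w) := by
          refine Finset.sum_congr rfl fun i _ => ?_
          rw [smul_sub, smul_smul]
  rw [key]
  exact Λ.sum_mem fun i _ => Λ.zsmul_mem (h i) _

lemma exists_double {G : MGraph n} (hconn : G.Connected) (hnb : ¬ G.Bipartite)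
    (v0 : Fin n) :
    ∃ i0 : Fin n, ((2 : ℤ) • Pi.single i0 1 : Fin n → ℤ) ∈ G.lattice := by
  by_contra hno
  push_neg at hno
  apply hnb
  set L : Set (Fin n) := {i | (Pi.single i 1 - Pi.single v0 1 : Fin n → ℤ) ∈ G.lattice}
    with hLdef
  set R : Set (Fin n) := {i | (Pi.single i 1 + Pi.single v0 1 : Fin n → ℤ) ∈ G.lattice}
    with hRdef
  have hcov : ∀ i : Fin n, i ∈ L ∨ i ∈ R := by
    intro i
    obtain ⟨s, hs, hm⟩ := sign_conn hconn i v0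
    rcases hs with h | h
    · left; rw [h, one_smul] at hm; exact hm
    · right; rw [h] at hm
      simp only [neg_smul, one_smul, sub_neg_eq_add] at hm
      exact hm
  have hLR : ∀ i, i ∈ L → i ∈ R → False := by
    intro i hiL hiR
    have := G.lattice.sub_mem hiR hiL
    have heq : (Pi.single i 1 + Pi.single v0 1 : Fin n → ℤ)
        - (Pi.single i 1 - Pi.single v0 1) = (2 : ℤ) • Pi.single v0 1 := by module
    rw [heq] at this
    exact hno v0 this
  refine ⟨L, R, ?_, ?_, ?_, ?_⟩
  · ext i; simp only [Set.mem_univ, true_iff, Set.mem_union]; exact hcov i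
  · rw [Set.disjoint_left]; intro i hiL hiR; exact hLR i hiL hiR
  · intro e he _
    have hm := se_mem he
    rcases hcov e.1 with h1 | h1
    · left
      refine ⟨h1, ?_⟩
      have := G.lattice.sub_mem hm h1
      have heq : (Pi.single e.1 1 + Pi.single e.2.1 1 : Fin n → ℤ)
          - (Pi.single e.1 1 - Pi.single v0 1)
          = Pi.single e.2.1 1 + Pi.single v0 1 := by module
      rw [heq] at this
      exact this
    · right
      refine ⟨h1, ?_⟩
      have := G.lattice.sub_mem hm h1
      have heq : (Pi.single e.1 1 + Pi.single e.2.1 1 : Fin n → ℤ)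
          - (Pi.single e.1 1 + Pi.single v0 1)
          = Pi.single e.2.1 1 - Pi.single v0 1 := by module
      rw [heq] at this
      exact this
  · intro e he _
    have hm := de_mem he
    rcases hcov e.1 with h1 | h1
    · left
      refine ⟨h1, ?_⟩
      have := G.lattice.add_mem hm h1
      have heq : (Pi.single e.2 1 - Pi.single e.1 1 : Fin n → ℤ)
          + (Pi.single e.1 1 - Pi.single v0 1)
          = Pi.single e.2 1 - Pi.single v0 1 := by module
      rw [heq] at this
      exact this
    · right
      refine ⟨h1, ?_⟩
      have := G.lattice.add_mem hm h1
      have heq : (Pi.single e.2 1 - Pi.single e.1 1 : Fin n → ℤ)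
          + (Pi.single e.1 1 + Pi.single v0 1)
          = Pi.single e.2 1 + Pi.single v0 1 := by module
      rw [heq] at this
      exact this

end Stmt17Aux

/-- lattice characterization for a connected mixed signed, directed
graph `G`: if the augmented graph is not bipartite, `a ∈ ℤρ(E(G))` iff `Σ aᵢ` is
even; if it is bipartite with (induced) bipartition `L ∪ R` on `V(G)`, then
`a ∈ ℤρ(E(G))` iff `Σ_{i∈L} aᵢ = Σ_{j∈R} aⱼ`. -/
theorem stmt17 {n : ℕ} (G : MGraph n) (hconn : G.Connected) (a : Fin n → ℤ) :
    (¬ G.Bipartite → (a ∈ G.lattice ↔ (2 : ℤ) ∣ ∑ i, a i)) ∧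
    (∀ L R : Set (Fin n), G.IsBipartition L R →
      (a ∈ G.lattice ↔ ∑ i, L.indicator a i = ∑ i, R.indicator a i)) := by
  classical
  constructor
  · -- non-bipartite case
    intro hnb
    -- first, n ≠ 0
    have hne : Nonempty (Fin n) := by
      by_contra hempty
      rw [not_nonempty_iff] at hempty
      apply hnb
      refine ⟨∅, ∅, ?_, by simp, fun e _ _ => (IsEmpty.false e.1).elim,
        fun e _ _ => (IsEmpty.false e.1).elim⟩
      rw [Set.union_empty]
      exact Set.univ_eq_empty_iff.mpr hempty
    constructor
    · -- forward: parity
      intro ha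
      have hgen : ∀ x ∈ G.rhoZSet, wsum (fun _ => (1 : ℤ)) x ∈
          AddSubgroup.zmultiples (2 : ℤ) := by
        rintro x (⟨e, he, rfl⟩ | ⟨e, he, rfl⟩)
        · rw [wsum_rhoZ]
          exact ⟨e.2.2, by simp [smul_eq_mul]⟩
        · rw [wsum_rhoD]
          exact ⟨0, by simp⟩
      have := lattice_wsum (fun _ => (1 : ℤ)) _ hgen ha
      obtain ⟨k, hk⟩ := this
      refine ⟨k, ?_⟩
      have : wsum (fun _ => (1 : ℤ)) a = ∑ i, a i := by
        rw [wsum_apply]; simp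
      rw [← this, ← hk]
      simp [smul_eq_mul, mul_comm]
    · -- backward
      intro hdvd
      obtain ⟨v0⟩ := hne
      obtain ⟨i0, h2⟩ := exists_double hconn hnb v0
      have hall : ∀ i : Fin n,
          (Pi.single i 1 - Pi.single i0 1 : Fin n → ℤ) ∈ G.lattice := by
        intro i
        obtain ⟨s, hs, hm⟩ := sign_conn hconn i i0
        rcases hs with h | h
        · rw [h, one_smul] at hm; exact hm
        · rw [h] at hm
          simp only [neg_smul, one_smul, sub_neg_eq_add] at hm
          have := G.lattice.sub_mem hm h2
          have heq : (Pi.single i 1 + Pi.single i0 1 : Fin n → ℤ)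
              - (2 : ℤ) • Pi.single i0 1 = Pi.single i 1 - Pi.single i0 1 := by module
          rwa [heq] at this
      have hdec := decomp (Λ := G.lattice) (fun _ => (1 : ℤ)) (Pi.single i0 1)
        (fun i => by simpa using hall i) a
      simp only [mul_one] at hdec
      obtain ⟨k, hk⟩ := hdvd
      have hmem : (∑ i, a i) • (Pi.single i0 1 : Fin n → ℤ) ∈ G.lattice := by
        rw [hk, mul_comm, ← smul_smul]
        exact G.lattice.zsmul_mem h2 k
      have := G.lattice.add_mem hdec hmem
      simpa using this
  · -- bipartite case
    intro L R hLR
    obtain ⟨hcov, hdisj, hSE, hDE⟩ := hLR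
    set ε : Fin n → ℤ := fun i => if i ∈ L then 1 else -1 with hεdef
    have hmemR : ∀ i : Fin n, i ∉ L → i ∈ R := by
      intro i hi
      have : i ∈ L ∪ R := hcov ▸ Set.mem_univ i
      rcases (Set.mem_union i L R).mp this with h | h
      · exact absurd h hi
      · exact h
    have hnotR : ∀ i : Fin n, i ∈ L → i ∉ R := fun i hi =>
      Set.disjoint_left.mp hdisj hi
    have hεL : ∀ i ∈ L, ε i = 1 := fun i hi => by simp [hεdef, hi]
    have hεR : ∀ i ∈ R, ε i = -1 := fun i hi => by
      have : i ∉ L := Set.disjoint_right.mp hdisj hi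
      simp [hεdef, this]
    have hεsq : ∀ i, ε i * ε i = 1 := by
      intro i; by_cases hi : i ∈ L <;> simp [hεdef, hi]
    -- the weighted sum computes the L-R difference
    have hws : ∑ i, L.indicator a i - ∑ i, R.indicator a i = wsum ε a := by
      rw [wsum_apply, ← Finset.sum_sub_distrib]
      refine Finset.sum_congr rfl fun i _ => ?_
      by_cases hi : i ∈ L
      · rw [Set.indicator_of_mem hi, Set.indicator_of_notMem (hnotR i hi),
          hεL i hi]
        ring
      · rw [Set.indicator_of_notMem hi, Set.indicator_of_mem (hmemR i hi),
          hεR i (hmemR i hi)]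
        ring
    -- forward: wsum ε vanishes on the lattice
    have hgen : ∀ x ∈ G.rhoZSet, wsum ε x ∈ (⊥ : AddSubgroup ℤ) := by
      rintro x (⟨e, he, rfl⟩ | ⟨e, he, rfl⟩)
      · rw [wsum_rhoZ, AddSubgroup.mem_bot]
        rcases hSE e he (Or.inl (Set.mem_univ _)) with ⟨h1, h2⟩ | ⟨h1, h2⟩
        · rw [hεL _ h1, hεR _ h2]; ring
        · rw [hεR _ h1, hεL _ h2]; ring
      · rw [wsum_rhoD, AddSubgroup.mem_bot]
        rcases hDE e he (Or.inl (Set.mem_univ _)) with ⟨h1, h2⟩ | ⟨h1, h2⟩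
        · rw [hεL _ h1, hεL _ h2]; ring
        · rw [hεR _ h1, hεR _ h2]; ring
    have hfwd : ∀ x ∈ G.lattice, wsum ε x = 0 := by
      intro x hx
      have := lattice_wsum ε ⊥ hgen hx
      rwa [AddSubgroup.mem_bot] at this
    constructor
    · intro ha
      have := hfwd a ha
      rw [← hws] at this
      omega
    · intro hsum
      have hw0 : wsum ε a = 0 := by rw [← hws]; omega
      rcases isEmpty_or_nonempty (Fin n) with hempty | hne2
      · have : a = 0 := Subsingleton.elim a 0
        rw [this]; exact G.lattice.zero_mem
      · obtain ⟨v0⟩ := hne2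
        -- for each i, single i 1 - (ε i * ε v0) • single v0 1 ∈ lattice
        have hall : ∀ i : Fin n,
            (Pi.single i 1 - (ε i * ε v0) • Pi.single v0 1 : Fin n → ℤ) ∈ G.lattice := by
          intro i
          obtain ⟨t, ht, hm⟩ := sign_conn hconn i v0
          have h0 := hfwd _ hm
          rw [map_sub, map_zsmul, wsum_single, wsum_single, mul_one, mul_one,
            smul_eq_mul] at h0
          have htval : t = ε i * ε v0 := by
            have h1 : ε i = t * ε v0 := by omega
            have := hεsq v0
            calc t = t * (ε v0 * ε v0) := by rw [this]; ring
              _ = (t * ε v0) * ε v0 := by ring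
              _ = ε i * ε v0 := by rw [← h1]
          rwa [← htval]
        have hdec := decomp (Λ := G.lattice) (fun i => ε i * ε v0)
          (Pi.single v0 1) hall a
        have hzero : ∑ i, a i * (ε i * ε v0) = 0 := by
          have : ∑ i, a i * (ε i * ε v0) = (∑ i, ε i * a i) * ε v0 := by
            rw [Finset.sum_mul]
            exact Finset.sum_congr rfl fun i _ => by ring
          rw [this, ← wsum_apply, hw0, zero_mul]
        rw [hzero, zero_smul, sub_zero] at hdec
        exact hdec

end EdgeRing
end
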